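/- Let d ≥ 1 be an integer, α > 0 with d > min(α,2) =: m, and ρ > 0. There exist ρ' ∈ (0, min(ρ,2)) and C < ∞, depending only on d, α and ρ (not on L, C₁, C₂, C₃), with the following property. Let L ≥ 1, C₁, C₂, C₃ ≥ 0, let f(x) = C₁⟨x⟩_L^{m−d}, and let g : ℤ^d → ℝ be ℤ^d-symmetric with |g(x)| ≤ C₂·δ_{o,x} + C₃·⟨x⟩_L^{−d−ρ} for all x (so g is absolutely summable). Then for every x ∈ ℤ^d: |(f*g)(x) − (∑_{y∈ℤ^d} g(y))·f(x)| ≤ C·C₁·C₃·⟨x⟩_L^{m−d−ρ'}. -/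

import Mathlib

open scoped BigOperators ENNReal

noncomputable section

namespace LongRange

abbrev V (d : ℕ) : Type := Fin d → ℤ

variable {d : ℕ}

def nrm (x : V d) : ℝ := Real.sqrt (∑ i, ((x i : ℝ)) ^ 2)

def bkt (L : ℝ) (x : V d) : ℝ := max (nrm x) L

def kdelta (x : V d) : ℝ := if x = 0 then 1 else 0

/-- `g` is invariant under reflections in coordinate hyperplanes and
permutations of the coordinates. -/
def ZdSymm (g : V d → ℝ) : Prop :=
  (∀ (s : Fin d → Bool) (x : V d), g (fun i => if s i then -(x i) else x i) = g x) ∧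
  (∀ (e : Equiv.Perm (Fin d)) (x : V d), g (fun i => x (e i)) = g x)

open Real

/-! ### basic facts -/

def emb (x : V d) : EuclideanSpace ℝ (Fin d) := WithLp.toLp 2 (fun i => (x i : ℝ))

lemma emb_sub (x y : V d) : emb (x - y) = emb x - emb y := by
  ext i
  simp [emb]

lemma nrm_eq_norm (x : V d) : nrm x = ‖emb x‖ := by
  rw [EuclideanSpace.norm_eq, nrm]
  congr 1
  refine Finset.sum_congr rfl fun i _ => ?_
  rw [Real.norm_eq_abs, sq_abs]
  rfl

lemma nrm_nonneg (x : V d) : 0 ≤ nrm x := Real.sqrt_nonneg _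

lemma abs_nrm_sub_nrm (x y : V d) : |nrm x - nrm y| ≤ nrm (x - y) := by
  rw [nrm_eq_norm, nrm_eq_norm, nrm_eq_norm, emb_sub]
  exact abs_norm_sub_norm_le _ _

lemma nrm_sub_comm (x y : V d) : nrm (x - y) = nrm (y - x) := by
  unfold nrm
  congr 1
  refine Finset.sum_congr rfl fun i _ => ?_
  have : ((x - y) i : ℝ) = -(((y - x) i : ℝ)) := by
    push_cast [Pi.sub_apply]
    ring
  rw [this, neg_sq]

lemma le_bkt {L : ℝ} (x : V d) : L ≤ bkt L x := le_max_right _ _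

lemma nrm_le_bkt {L : ℝ} (x : V d) : nrm x ≤ bkt L x := le_max_left _ _

lemma one_le_bkt {L : ℝ} (hL : 1 ≤ L) (x : V d) : 1 ≤ bkt L x := hL.trans (le_bkt x)

lemma bkt_pos {L : ℝ} (hL : 1 ≤ L) (x : V d) : 0 < bkt L x :=
  lt_of_lt_of_le one_pos (one_le_bkt hL x)

lemma abs_bkt_sub_bkt {L : ℝ} (x y : V d) : |bkt L y - bkt L x| ≤ nrm (x - y) := by
  refine le_trans (abs_max_sub_max_le_abs _ _ _) ?_
  rw [nrm_sub_comm]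
  exact abs_nrm_sub_nrm y x

lemma coord_le_nrm (x : V d) (i : Fin d) : |(x i : ℝ)| ≤ nrm x := by
  rw [← Real.sqrt_sq_eq_abs]
  apply Real.sqrt_le_sqrt
  exact Finset.single_le_sum (f := fun j => ((x j : ℝ))^2) (fun j _ => sq_nonneg _)
    (Finset.mem_univ i)

/-! ### mean value type inequality for rpow -/

lemma rpow_key {s t b : ℝ} (hs : 0 < s) (hst : s ≤ t) (hb : 0 < b) :
    t ^ b - s ^ b ≤ b * s⁻¹ * t ^ b * (t - s) := by
  have ht : 0 < t := hs.trans_le hst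
  have hts : 0 ≤ t - s := sub_nonneg.mpr hst
  have hsb : 0 < s ^ b := rpow_pos_of_pos hs b
  have htb : 0 < t ^ b := rpow_pos_of_pos ht b
  have hmono : s ^ b ≤ t ^ b := rpow_le_rpow hs.le hst hb.le
  rcases le_total b 1 with hb1 | hb1
  · have h0 : (0:ℝ) ≤ t / s - 1 := by
      rw [sub_nonneg, le_div_iff₀ hs]; linarith
    have hber := rpow_one_add_le_one_add_mul_self (s := t/s - 1) (by linarith) hb.le hb1
    have e1 : (1:ℝ) + (t/s - 1) = t/s := by ring
    rw [e1, Real.div_rpow ht.le hs.le] at hber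
    have h2 : t ^ b ≤ s ^ b + b * (s ^ b * s⁻¹) * (t - s) := by
      have := mul_le_mul_of_nonneg_right hber hsb.le
      rw [div_mul_cancel₀ _ hsb.ne'] at this
      calc t ^ b ≤ (1 + b * (t/s - 1)) * s ^ b := this
        _ = s ^ b + b * (s ^ b * s⁻¹) * (t - s) := by field_simp
    calc t ^ b - s ^ b ≤ b * (s ^ b * s⁻¹) * (t - s) := by linarith
      _ ≤ b * (t ^ b * s⁻¹) * (t - s) := by
          have : s ^ b * s⁻¹ ≤ t ^ b * s⁻¹ :=
            mul_le_mul_of_nonneg_right hmono (inv_nonneg.mpr hs.le)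
          have hbn : (0:ℝ) ≤ b := hb.le
          have h4 := mul_le_mul_of_nonneg_right (mul_le_mul_of_nonneg_left this hbn) hts
          linarith
      _ = b * s⁻¹ * t ^ b * (t - s) := by ring
  · have h0 : (-1:ℝ) ≤ s / t - 1 := by
      have : 0 < s / t := div_pos hs ht
      linarith
    have hber := one_add_mul_self_le_rpow_one_add (s := s/t - 1) h0 hb1
    have e1 : (1:ℝ) + (s/t - 1) = s/t := by ring
    rw [e1, Real.div_rpow hs.le ht.le] at hber
    have h2 : t ^ b - s ^ b ≤ b * (t ^ b * t⁻¹) * (t - s) := by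
      have := mul_le_mul_of_nonneg_right hber htb.le
      rw [div_mul_cancel₀ _ htb.ne'] at this
      have e2 : (1 + b * (s/t - 1)) * t ^ b = t ^ b - b * (t ^ b * t⁻¹) * (t - s) := by
        field_simp; ring
      rw [e2] at this
      linarith
    calc t ^ b - s ^ b ≤ b * (t ^ b * t⁻¹) * (t - s) := h2
      _ ≤ b * (t ^ b * s⁻¹) * (t - s) := by
          have hinv : t⁻¹ ≤ s⁻¹ := one_div t ▸ one_div s ▸ by
            exact one_div_le_one_div_of_le hs hst
          have : t ^ b * t⁻¹ ≤ t ^ b * s⁻¹ :=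
            mul_le_mul_of_nonneg_left hinv htb.le
          have hbn : (0:ℝ) ≤ b := hb.le
          have h4 := mul_le_mul_of_nonneg_right (mul_le_mul_of_nonneg_left this hbn) hts
          linarith
      _ = b * s⁻¹ * t ^ b * (t - s) := by ring

lemma rpow_sub_rpow_le {s t a : ℝ} (hs : 0 < s) (hst : s ≤ t) (ha : a < 0) :
    s ^ a - t ^ a ≤ (-a) * s ^ (a - 1) * (t - s) := by
  have ht : 0 < t := hs.trans_le hst
  have hb : 0 < -a := by linarith
  have key := rpow_key hs hst hb
  have hsb : 0 < s ^ (-a) := rpow_pos_of_pos hs _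
  have htb : 0 < t ^ (-a) := rpow_pos_of_pos ht _
  have e1 : s ^ a = (s ^ (-a))⁻¹ := by
    rw [← Real.rpow_neg hs.le, neg_neg]
  have e2 : t ^ a = (t ^ (-a))⁻¹ := by
    rw [← Real.rpow_neg ht.le, neg_neg]
  have e3 : s ^ (a - 1) = s⁻¹ * (s ^ (-a))⁻¹ := by
    rw [← Real.rpow_neg hs.le, neg_neg, ← Real.rpow_neg_one s, ← Real.rpow_add hs]
    ring_nf
  rw [e1, e2, e3]
  have expand : (s ^ (-a))⁻¹ - (t ^ (-a))⁻¹ = (t ^ (-a) - s ^ (-a)) / (s ^ (-a) * t ^ (-a)) := by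
    field_simp
  rw [expand, div_le_iff₀ (mul_pos hsb htb)]
  calc t ^ (-a) - s ^ (-a) ≤ (-a) * s⁻¹ * t ^ (-a) * (t - s) := key
    _ = (-a) * (s⁻¹ * (s ^ (-a))⁻¹) * (t - s) * (s ^ (-a) * t ^ (-a)) := by
      field_simp

lemma half_rpow {X c : ℝ} (hX : 0 ≤ X) : (X/2)^c = 2^(-c) * X^c := by
  rw [Real.div_rpow hX (by norm_num : (0:ℝ) ≤ 2), div_eq_mul_inv,
    ← Real.rpow_neg (by norm_num : (0:ℝ) ≤ 2)]
  ring

/-! ### summability of the basic decaying function on `ℤ^d` -/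

def h1 (e : ℝ) (k : ℤ) : ℝ := (max |(k : ℝ)| 1) ^ (-e)

lemma h1_nonneg (e : ℝ) (k : ℤ) : 0 ≤ h1 e k :=
  rpow_nonneg (le_trans zero_le_one (le_max_right _ _)) _

lemma h1_summable {e : ℝ} (he : 1 < e) : Summable (h1 e) := by
  have hmaj : Summable (fun k : ℤ => |(k : ℝ)| ^ (-e) + if k = 0 then 1 else 0) := by
    apply (summable_abs_int_rpow he).add
    apply summable_of_ne_finset_zero (s := {(0:ℤ)})
    intro b hb
    simp only [Finset.mem_singleton] at hb
    simp [hb]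
  apply Summable.of_nonneg_of_le (fun k => h1_nonneg e k) _ hmaj
  intro k
  by_cases hk : k = 0
  · subst hk
    simp only [h1, Int.cast_zero, abs_zero]
    rw [max_eq_right zero_le_one, Real.one_rpow,
      Real.zero_rpow (neg_ne_zero.mpr (by linarith))]
    norm_num
  · have h1e : (1:ℝ) ≤ |(k:ℝ)| := by
      rw [← Int.cast_abs]
      exact_mod_cast Int.one_le_abs (by simpa using hk)
    have hmx : max |(k:ℝ)| 1 = |(k:ℝ)| := max_eq_left h1e
    simp only [h1, hmx, hk, if_false, add_zero, le_refl]

set_option maxHeartbeats 1000000 in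
lemma pi_prod_summable_tsum {h : ℤ → ℝ} (h0 : ∀ k, 0 ≤ h k) (hs : Summable h) :
    ∀ n : ℕ, Summable (fun z : Fin n → ℤ => ∏ i, h (z i)) ∧
      (∑' z : Fin n → ℤ, ∏ i, h (z i)) = (∑' k, h k) ^ n := by
  intro n
  induction n with
  | zero =>
      constructor
      · exact (hasSum_fintype _).summable
      · rw [tsum_fintype]
        simp
  | succ n ih =>
      have hcomp : (fun z : Fin (n+1) → ℤ => ∏ i, h (z i)) ∘ (Fin.consEquiv (fun _ => ℤ))
          = fun p : ℤ × (Fin n → ℤ) => h p.1 * ∏ i, h (p.2 i) := by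
        funext p
        simp only [Function.comp_apply, Fin.consEquiv_apply]
        rw [Fin.prod_univ_succ]
        simp
      have hsum2 : Summable (fun p : ℤ × (Fin n → ℤ) => h p.1 * ∏ i, h (p.2 i)) :=
        Summable.mul_of_nonneg (f := h) (g := fun w : Fin n → ℤ => ∏ i, h (w i))
          hs ih.1 (fun k => h0 k) (fun w => Finset.prod_nonneg fun i _ => h0 _)
      constructor
      · rw [← (Fin.consEquiv (fun _ => ℤ)).summable_iff, hcomp]
        exact hsum2
      · rw [← (Fin.consEquiv (fun _ => ℤ)).tsum_eq]
        have e2 : ∑' (c : ℤ × (Fin n → ℤ)), ∏ i, h (((Fin.consEquiv (fun _ => ℤ)) c) i)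
            = ∑' p : ℤ × (Fin n → ℤ), h p.1 * ∏ i, h (p.2 i) :=
          tsum_congr fun p => congrFun hcomp p
        rw [e2, ← Summable.tsum_mul_tsum hs ih.1 hsum2, ih.2]
        ring

/-- the uniform (in `L`) constant bounding `∑ ⟨z⟩^(-d-δ)` -/
def Kc (d : ℕ) (δ : ℝ) : ℝ := (∑' k : ℤ, h1 (1 + δ/d) k) ^ d

lemma Kc_nonneg (d : ℕ) (δ : ℝ) : 0 ≤ Kc d δ :=
  pow_nonneg (tsum_nonneg fun k => h1_nonneg _ k) _

lemma summable_bkt (hd : 1 ≤ d) {L δ : ℝ} (hL : 1 ≤ L) (hδ : 0 < δ) :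
    Summable (fun z : V d => bkt L z ^ (-(d:ℝ) - δ)) ∧
      (∑' z : V d, bkt L z ^ (-(d:ℝ) - δ)) ≤ Kc d δ := by
  have hd0 : (0:ℝ) < d := by exact_mod_cast Nat.lt_of_lt_of_le Nat.zero_lt_one hd
  have he : 1 < 1 + δ/d := by
    have : 0 < δ/d := div_pos hδ hd0
    linarith
  have hs1 := h1_summable he
  have hpp := pi_prod_summable_tsum (h1_nonneg (1 + δ/d)) hs1 d
  -- pointwise comparison
  have hpt : ∀ z : V d, bkt L z ^ (-(d:ℝ) - δ) ≤ ∏ i, h1 (1 + δ/d) (z i) := by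
    intro z
    have hB1 : 1 ≤ bkt L z := one_le_bkt hL z
    have hB0 : 0 < bkt L z := lt_of_lt_of_le one_pos hB1
    have hmle : ∀ i : Fin d, max |((z i : ℝ))| 1 ≤ bkt L z := fun i =>
      max_le ((coord_le_nrm z i).trans (nrm_le_bkt z)) hB1
    have hm0 : ∀ i : Fin d, (0:ℝ) ≤ max |((z i : ℝ))| 1 := fun i =>
      le_trans zero_le_one (le_max_right _ _)
    have hm1 : ∀ i : Fin d, (1:ℝ) ≤ max |((z i : ℝ))| 1 := fun i => le_max_right _ _
    have hprod_le : (∏ i, max |((z i : ℝ))| 1) ≤ (bkt L z) ^ (d:ℕ) := by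
      calc (∏ i, max |((z i : ℝ))| 1) ≤ ∏ _i : Fin d, bkt L z :=
            Finset.prod_le_prod (fun i _ => hm0 i) (fun i _ => hmle i)
        _ = (bkt L z) ^ (d:ℕ) := by
            rw [Finset.prod_const, Finset.card_univ, Fintype.card_fin]
    have hprod_pos : 0 < ∏ i, max |((z i : ℝ))| 1 :=
      Finset.prod_pos fun i _ => lt_of_lt_of_le one_pos (hm1 i)
    have e1 : (∏ i, h1 (1 + δ/d) (z i)) = (∏ i, max |((z i : ℝ))| 1) ^ (-(1 + δ/d)) := by
      rw [← Real.finset_prod_rpow _ _ (fun i _ => hm0 i)]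
      rfl
    rw [e1]
    have e2 : bkt L z ^ (-(d:ℝ) - δ) = ((bkt L z) ^ (d:ℕ)) ^ (-(1 + δ/d)) := by
      rw [← Real.rpow_natCast (bkt L z) d, ← Real.rpow_mul hB0.le]
      congr 1
      field_simp
      ring
    rw [e2]
    exact rpow_le_rpow_of_nonpos hprod_pos hprod_le (by linarith)
  constructor
  · exact Summable.of_nonneg_of_le (fun z => rpow_nonneg (bkt_pos hL z).le _) hpt hpp.1
  · calc (∑' z : V d, bkt L z ^ (-(d:ℝ) - δ))
        ≤ ∑' z : V d, ∏ i, h1 (1 + δ/d) (z i) :=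
          Summable.tsum_le_tsum hpt
            (Summable.of_nonneg_of_le (fun z => rpow_nonneg (bkt_pos hL z).le _) hpt hpp.1)
            hpp.1
      _ = Kc d δ := by rw [hpp.2, Kc]

lemma summable_kdelta : Summable (fun z : V d => kdelta z) := by
  apply summable_of_ne_finset_zero (s := {(0 : V d)})
  intro z hz
  simp only [Finset.mem_singleton] at hz
  simp [kdelta, hz]

/-! ### the pointwise term bound -/

lemma term_bound {L a ρ : ℝ} (hL : 1 ≤ L) (had : -(d:ℝ) < a) (ha0 : a < 0)
    (hρ : 0 < ρ) (x y : V d) :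
    |bkt L y ^ a - bkt L x ^ a| * bkt L (x - y) ^ (-(d:ℝ) - ρ) ≤
      ((-a) * 2 ^ (1 - a)) * bkt L x ^ (a - 1 + max (1 - ρ/2) 0) * bkt L (x - y) ^ (-(d:ℝ) - ρ/2)
      + 2 ^ (1 + ρ/2) * bkt L x ^ (a - ρ/2) * bkt L (x - y) ^ (-(d:ℝ) - ρ/2)
      + 2 ^ ((d:ℝ) + ρ) * bkt L x ^ (a - ρ/2) * bkt L y ^ (-(d:ℝ) - ρ/2) := by
  set X := bkt L x with hXdef
  set Y := bkt L y with hYdef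
  set W := bkt L (x - y) with hWdef
  have hX1 : 1 ≤ X := one_le_bkt hL x
  have hY1 : 1 ≤ Y := one_le_bkt hL y
  have hW1 : 1 ≤ W := one_le_bkt hL (x - y)
  have hX0 : (0:ℝ) < X := lt_of_lt_of_le one_pos hX1
  have hY0 : (0:ℝ) < Y := lt_of_lt_of_le one_pos hY1
  have hW0 : (0:ℝ) < W := lt_of_lt_of_le one_pos hW1
  have hX20 : (0:ℝ) < X/2 := by linarith
  have hnW : nrm (x - y) ≤ W := nrm_le_bkt _
  have hYX : |Y - X| ≤ nrm (x - y) := abs_bkt_sub_bkt x y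
  have haneg : (0:ℝ) ≤ -a := by linarith
  -- nonnegativity of the three RHS addends
  have hadd1 : 0 ≤ ((-a) * 2 ^ (1 - a)) * X ^ (a - 1 + max (1 - ρ/2) 0) * W ^ (-(d:ℝ) - ρ/2) := by
    apply mul_nonneg (mul_nonneg (mul_nonneg haneg (rpow_nonneg (by norm_num) _))
      (rpow_nonneg hX0.le _)) (rpow_nonneg hW0.le _)
  have hadd2 : 0 ≤ 2 ^ (1 + ρ/2) * X ^ (a - ρ/2) * W ^ (-(d:ℝ) - ρ/2) := by
    apply mul_nonneg (mul_nonneg (rpow_nonneg (by norm_num) _) (rpow_nonneg hX0.le _))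
      (rpow_nonneg hW0.le _)
  have hadd3 : 0 ≤ 2 ^ ((d:ℝ) + ρ) * X ^ (a - ρ/2) * Y ^ (-(d:ℝ) - ρ/2) := by
    apply mul_nonneg (mul_nonneg (rpow_nonneg (by norm_num) _) (rpow_nonneg hX0.le _))
      (rpow_nonneg hY0.le _)
  rcases le_total (nrm (x - y)) (X/2) with hcase | hcase
  · -- Case A : nrm (x-y) ≤ X/2
    have hY2 : X/2 ≤ Y := by
      have := abs_le.mp (hYX.trans hcase)
      linarith [this.1]
    have key : |Y ^ a - X ^ a| ≤ (-a) * (X/2) ^ (a-1) * nrm (x - y) := by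
      rcases le_total Y X with hyx | hxy
      · have h1 : X ^ a ≤ Y ^ a := rpow_le_rpow_of_nonpos hY0 hyx ha0.le
        rw [abs_of_nonneg (sub_nonneg.mpr h1)]
        have h2 := rpow_sub_rpow_le hY0 hyx ha0
        have h3 : Y ^ (a-1) ≤ (X/2) ^ (a-1) :=
          rpow_le_rpow_of_nonpos hX20 hY2 (by linarith)
        have h4 : X - Y ≤ nrm (x - y) := by
          have := abs_le.mp hYX
          linarith [this.1]
        calc Y ^ a - X ^ a ≤ (-a) * Y ^ (a-1) * (X - Y) := h2
          _ ≤ (-a) * (X/2) ^ (a-1) * nrm (x - y) := by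
              apply mul_le_mul (mul_le_mul_of_nonneg_left h3 haneg) h4
                (by linarith) (mul_nonneg haneg (rpow_nonneg hX20.le _))
      · have h1 : Y ^ a ≤ X ^ a := rpow_le_rpow_of_nonpos hX0 hxy ha0.le
        rw [abs_of_nonpos (sub_nonpos.mpr h1), neg_sub]
        have h2 := rpow_sub_rpow_le hX0 hxy ha0
        have h3 : X ^ (a-1) ≤ (X/2) ^ (a-1) :=
          rpow_le_rpow_of_nonpos hX20 (by linarith) (by linarith)
        have h4 : Y - X ≤ nrm (x - y) := by
          have := abs_le.mp hYX
          linarith [this.2]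
        calc X ^ a - Y ^ a ≤ (-a) * X ^ (a-1) * (Y - X) := h2
          _ ≤ (-a) * (X/2) ^ (a-1) * nrm (x - y) := by
              apply mul_le_mul (mul_le_mul_of_nonneg_left h3 haneg) h4
                (by linarith) (mul_nonneg haneg (rpow_nonneg hX20.le _))
    have hWq : W ^ (1 - ρ/2) ≤ X ^ (max (1 - ρ/2) 0) := by
      rcases le_total ρ 2 with hρ2 | hρ2
      · have h0 : (0:ℝ) ≤ 1 - ρ/2 := by linarith
        have hWX : W ≤ X := by
          apply max_le (hcase.trans (by linarith)) (le_bkt x)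
        rw [max_eq_left h0]
        exact rpow_le_rpow hW0.le hWX h0
      · have h0 : 1 - ρ/2 ≤ 0 := by linarith
        rw [max_eq_right (by linarith : 1 - ρ/2 ≤ 0), Real.rpow_zero]
        exact rpow_le_one_of_one_le_of_nonpos hW1 h0
    -- assemble case A
    have hsplit : nrm (x - y) * W ^ (-(d:ℝ) - ρ) ≤ W ^ (1 - ρ/2) * W ^ (-(d:ℝ) - ρ/2) := by
      have e1 : W ^ (1 - ρ/2) * W ^ (-(d:ℝ) - ρ/2) = W * W ^ (-(d:ℝ) - ρ) := by
        rw [← Real.rpow_add hW0,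
          show (1 - ρ/2 + (-(d:ℝ) - ρ/2)) = 1 + (-(d:ℝ) - ρ) by ring,
          Real.rpow_add hW0, Real.rpow_one]
      rw [e1]
      apply mul_le_mul_of_nonneg_right hnW (rpow_nonneg hW0.le _)
    calc |Y ^ a - X ^ a| * W ^ (-(d:ℝ) - ρ)
        ≤ ((-a) * (X/2) ^ (a-1) * nrm (x - y)) * W ^ (-(d:ℝ) - ρ) := by
          apply mul_le_mul_of_nonneg_right key (rpow_nonneg hW0.le _)
      _ = ((-a) * (X/2) ^ (a-1)) * (nrm (x - y) * W ^ (-(d:ℝ) - ρ)) := by ring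
      _ ≤ ((-a) * (X/2) ^ (a-1)) * (W ^ (1 - ρ/2) * W ^ (-(d:ℝ) - ρ/2)) := by
          apply mul_le_mul_of_nonneg_left hsplit (mul_nonneg haneg (rpow_nonneg hX20.le _))
      _ ≤ ((-a) * (X/2) ^ (a-1)) * (X ^ (max (1 - ρ/2) 0) * W ^ (-(d:ℝ) - ρ/2)) := by
          apply mul_le_mul_of_nonneg_left _ (mul_nonneg haneg (rpow_nonneg hX20.le _))
          apply mul_le_mul_of_nonneg_right hWq (rpow_nonneg hW0.le _)
      _ = ((-a) * 2 ^ (1 - a)) * X ^ (a - 1 + max (1 - ρ/2) 0) * W ^ (-(d:ℝ) - ρ/2) := by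
          rw [half_rpow hX0.le, Real.rpow_add hX0]
          have : -(a - 1) = 1 - a := by ring
          rw [this]
          ring
      _ ≤ _ := by linarith
  · -- Case B : X/2 ≤ nrm (x-y) ≤ W
    have hXW : X/2 ≤ W := hcase.trans hnW
    have habs : |Y ^ a - X ^ a| ≤ Y ^ a + X ^ a := by
      refine (abs_sub _ _).trans ?_
      rw [abs_of_nonneg (rpow_nonneg hY0.le _), abs_of_nonneg (rpow_nonneg hX0.le _)]
    have hWsplit : W ^ (-(d:ℝ) - ρ) = W ^ (-(ρ/2)) * W ^ (-(d:ℝ) - ρ/2) := by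
      rw [← Real.rpow_add hW0]
      congr 1
      ring
    have hXpart : X ^ a * W ^ (-(d:ℝ) - ρ) ≤ 2 ^ (ρ/2) * X ^ (a - ρ/2) * W ^ (-(d:ℝ) - ρ/2) := by
      rw [hWsplit]
      have h1 : W ^ (-(ρ/2)) ≤ (X/2) ^ (-(ρ/2)) :=
        rpow_le_rpow_of_nonpos hX20 hXW (by linarith)
      have h2 : (X/2) ^ (-(ρ/2)) = 2 ^ (ρ/2) * X ^ (-(ρ/2)) := by
        rw [half_rpow hX0.le, neg_neg]
      calc X ^ a * (W ^ (-(ρ/2)) * W ^ (-(d:ℝ) - ρ/2))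
          ≤ X ^ a * ((X/2) ^ (-(ρ/2)) * W ^ (-(d:ℝ) - ρ/2)) := by
            apply mul_le_mul_of_nonneg_left
              (mul_le_mul_of_nonneg_right h1 (rpow_nonneg hW0.le _)) (rpow_nonneg hX0.le _)
        _ = 2 ^ (ρ/2) * X ^ (a - ρ/2) * W ^ (-(d:ℝ) - ρ/2) := by
            rw [h2]
            rw [show a - ρ/2 = a + (-(ρ/2)) by ring, Real.rpow_add hX0]
            ring
    rcases le_total Y X with hyx | hxy
    · -- Y ≤ X : use the third addend for the Y-part
      have hYsplit : Y ^ a = Y ^ ((d:ℝ) + a + ρ/2) * Y ^ (-(d:ℝ) - ρ/2) := by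
        rw [← Real.rpow_add hY0]
        congr 1
        ring
      have hYpart : Y ^ a * W ^ (-(d:ℝ) - ρ) ≤
          2 ^ ((d:ℝ) + ρ) * X ^ (a - ρ/2) * Y ^ (-(d:ℝ) - ρ/2) := by
        have h1 : Y ^ ((d:ℝ) + a + ρ/2) ≤ X ^ ((d:ℝ) + a + ρ/2) :=
          rpow_le_rpow hY0.le hyx (by linarith)
        have h2 : W ^ (-(d:ℝ) - ρ) ≤ (X/2) ^ (-(d:ℝ) - ρ) :=
          rpow_le_rpow_of_nonpos hX20 hXW (by nlinarith [Nat.cast_nonneg (α := ℝ) d])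
        have h3 : (X/2) ^ (-(d:ℝ) - ρ) = 2 ^ ((d:ℝ) + ρ) * X ^ (-(d:ℝ) - ρ) := by
          rw [half_rpow hX0.le]
          congr 2
          ring
        calc Y ^ a * W ^ (-(d:ℝ) - ρ)
            = Y ^ ((d:ℝ) + a + ρ/2) * Y ^ (-(d:ℝ) - ρ/2) * W ^ (-(d:ℝ) - ρ) := by
              rw [← hYsplit]
          _ ≤ X ^ ((d:ℝ) + a + ρ/2) * Y ^ (-(d:ℝ) - ρ/2) * (X/2) ^ (-(d:ℝ) - ρ) := by
              apply mul_le_mul (mul_le_mul_of_nonneg_right h1 (rpow_nonneg hY0.le _)) h2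
                (rpow_nonneg hW0.le _)
                (mul_nonneg (rpow_nonneg hX0.le _) (rpow_nonneg hY0.le _))
          _ = 2 ^ ((d:ℝ) + ρ) * (X ^ ((d:ℝ) + a + ρ/2) * X ^ (-(d:ℝ) - ρ)) * Y ^ (-(d:ℝ) - ρ/2) := by
              rw [h3]
              ring
          _ = 2 ^ ((d:ℝ) + ρ) * X ^ (a - ρ/2) * Y ^ (-(d:ℝ) - ρ/2) := by
              rw [← Real.rpow_add hX0]
              congr 2
              ring
      have h2' : 2 ^ (ρ/2) * X ^ (a - ρ/2) * W ^ (-(d:ℝ) - ρ/2)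
          ≤ 2 ^ (1 + ρ/2) * X ^ (a - ρ/2) * W ^ (-(d:ℝ) - ρ/2) := by
        apply mul_le_mul_of_nonneg_right (mul_le_mul_of_nonneg_right _ (rpow_nonneg hX0.le _))
          (rpow_nonneg hW0.le _)
        exact rpow_le_rpow_of_exponent_le (by norm_num) (by linarith)
      calc |Y ^ a - X ^ a| * W ^ (-(d:ℝ) - ρ)
          ≤ (Y ^ a + X ^ a) * W ^ (-(d:ℝ) - ρ) := by
            apply mul_le_mul_of_nonneg_right habs (rpow_nonneg hW0.le _)
        _ = Y ^ a * W ^ (-(d:ℝ) - ρ) + X ^ a * W ^ (-(d:ℝ) - ρ) := by ring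
        _ ≤ (2 ^ ((d:ℝ) + ρ) * X ^ (a - ρ/2) * Y ^ (-(d:ℝ) - ρ/2))
            + 2 ^ (ρ/2) * X ^ (a - ρ/2) * W ^ (-(d:ℝ) - ρ/2) := add_le_add hYpart hXpart
        _ ≤ _ := by linarith
    · -- X ≤ Y : Y^a ≤ X^a, both parts go to the second addend
      have h1 : Y ^ a ≤ X ^ a := rpow_le_rpow_of_nonpos hX0 hxy ha0.le
      have htwo : (2:ℝ) * (2 ^ (ρ/2) * X ^ (a - ρ/2) * W ^ (-(d:ℝ) - ρ/2))
          = 2 ^ (1 + ρ/2) * X ^ (a - ρ/2) * W ^ (-(d:ℝ) - ρ/2) := by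
        rw [Real.rpow_add (by norm_num : (0:ℝ) < 2), Real.rpow_one]
        ring
      calc |Y ^ a - X ^ a| * W ^ (-(d:ℝ) - ρ)
          ≤ (Y ^ a + X ^ a) * W ^ (-(d:ℝ) - ρ) := by
            apply mul_le_mul_of_nonneg_right habs (rpow_nonneg hW0.le _)
        _ ≤ (X ^ a + X ^ a) * W ^ (-(d:ℝ) - ρ) := by
            apply mul_le_mul_of_nonneg_right (by linarith) (rpow_nonneg hW0.le _)
        _ = 2 * (X ^ a * W ^ (-(d:ℝ) - ρ)) := by ring
        _ ≤ 2 * (2 ^ (ρ/2) * X ^ (a - ρ/2) * W ^ (-(d:ℝ) - ρ/2)) := by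
            apply mul_le_mul_of_nonneg_left hXpart (by norm_num)
        _ = 2 ^ (1 + ρ/2) * X ^ (a - ρ/2) * W ^ (-(d:ℝ) - ρ/2) := htwo
        _ ≤ _ := by linarith

/-! ### main theorem -/

set_option maxHeartbeats 2000000 in
/-- convolution of `C₁⟨·⟩_L^{m−d}` with a summable symmetric `g`. -/
theorem statement14 (d : ℕ) (hd : 1 ≤ d) (α ρ : ℝ) (hα : 0 < α)
    (hdm : min α 2 < (d : ℝ)) (hρ : 0 < ρ) :
    ∃ ρ' C : ℝ, 0 < ρ' ∧ ρ' < min ρ 2 ∧ 0 ≤ C ∧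
      ∀ L : ℝ, 1 ≤ L → ∀ C₁ C₂ C₃ : ℝ, 0 ≤ C₁ → 0 ≤ C₂ → 0 ≤ C₃ →
        ∀ g : V d → ℝ, ZdSymm g →
          (∀ x : V d, |g x| ≤ C₂ * kdelta x + C₃ * bkt L x ^ (-(d : ℝ) - ρ)) →
          ∀ x : V d,
            |(∑' y : V d, (C₁ * bkt L y ^ (min α 2 - (d : ℝ))) * g (x - y)) -
                (∑' y : V d, g y) * (C₁ * bkt L x ^ (min α 2 - (d : ℝ)))| ≤
              C * C₁ * C₃ * bkt L x ^ (min α 2 - (d : ℝ) - ρ') := by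
  have hd0 : (0:ℝ) < d := by exact_mod_cast Nat.lt_of_lt_of_le Nat.zero_lt_one hd
  have hm0 : 0 < min α 2 := lt_min hα (by norm_num)
  set a := min α 2 - (d:ℝ) with ha
  have ha0 : a < 0 := by rw [ha]; linarith
  have had : -(d:ℝ) < a := by rw [ha]; linarith
  set ρ' := min 1 (ρ/2) with hρ'
  set c1 := (-a) * (2:ℝ) ^ (1 - a) with hc1
  set c2 := (2:ℝ) ^ (1 + ρ/2) with hc2
  set c3 := (2:ℝ) ^ ((d:ℝ) + ρ) with hc3
  have hc1n : 0 ≤ c1 := mul_nonneg (by linarith) (rpow_nonneg (by norm_num) _)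
  have hc2n : 0 ≤ c2 := rpow_nonneg (by norm_num) _
  have hc3n : 0 ≤ c3 := rpow_nonneg (by norm_num) _
  set C : ℝ := (c1 + c2 + c3) * Kc d (ρ/2) with hC
  have hρ'2 : ρ' ≤ ρ/2 := min_le_right _ _
  have hρ'1 : ρ' ≤ 1 := min_le_left _ _
  refine ⟨ρ', C, lt_min one_pos (by linarith), ?_, ?_, ?_⟩
  · exact lt_min (lt_of_le_of_lt hρ'2 (by linarith)) (lt_of_le_of_lt hρ'1 one_lt_two)
  · apply mul_nonneg _ (Kc_nonneg _ _)
    linarith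
  intro L hL C₁ C₂ C₃ hC₁ hC₂ hC₃ g _hsym hgb x
  have hδ2 : 0 < ρ/2 := by linarith
  obtain ⟨hsb, hsbK⟩ := summable_bkt hd hL hδ2
  obtain ⟨hsρ, -⟩ := summable_bkt hd hL hρ
  set X := bkt L x with hX
  have hX1 : 1 ≤ X := one_le_bkt hL x
  have hX0 : (0:ℝ) < X := lt_of_lt_of_le one_pos hX1
  -- summability of g
  have hgabs : Summable (fun z : V d => |g z|) := by
    apply Summable.of_nonneg_of_le (fun z => abs_nonneg _) hgb
    exact (summable_kdelta.mul_left C₂).add (hsρ.mul_left C₃)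
  have hg : Summable g := hgabs.of_abs
  have hgx : Summable (fun y : V d => g (x - y)) := by
    have := (Equiv.subLeft x).summable_iff (f := g)
    simpa [Function.comp_def] using this.mpr hg
  have hgxabs : Summable (fun y : V d => |g (x - y)|) := by
    have := (Equiv.subLeft x).summable_iff (f := fun z : V d => |g z|)
    simpa [Function.comp_def] using this.mpr hgabs
  have hbkt_le_one : ∀ y : V d, bkt L y ^ a ≤ 1 := fun y =>
    rpow_le_one_of_one_le_of_nonpos (one_le_bkt hL y) ha0.le
  have hbd1 : ∀ y : V d, |(C₁ * bkt L y ^ a) * g (x - y)| ≤ C₁ * |g (x - y)| := by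
    intro y
    rw [abs_mul, abs_mul, abs_of_nonneg hC₁,
      abs_of_nonneg (rpow_nonneg (bkt_pos hL y).le a)]
    calc C₁ * bkt L y ^ a * |g (x - y)| ≤ C₁ * 1 * |g (x - y)| := by
          apply mul_le_mul_of_nonneg_right _ (abs_nonneg _)
          exact mul_le_mul_of_nonneg_left (hbkt_le_one y) hC₁
      _ = C₁ * |g (x - y)| := by ring
  have hbd2 : ∀ y : V d, |g (x - y) * (C₁ * X ^ a)| ≤ C₁ * |g (x - y)| := by
    intro y
    rw [abs_mul, abs_mul, abs_of_nonneg hC₁,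
      abs_of_nonneg (rpow_nonneg hX0.le a)]
    calc |g (x - y)| * (C₁ * X ^ a) ≤ |g (x - y)| * (C₁ * 1) := by
          apply mul_le_mul_of_nonneg_left _ (abs_nonneg _)
          exact mul_le_mul_of_nonneg_left (hbkt_le_one x) hC₁
      _ = C₁ * |g (x - y)| := by ring
  have hf1 : Summable (fun y : V d => (C₁ * bkt L y ^ a) * g (x - y)) := by
    apply Summable.of_abs
    exact Summable.of_nonneg_of_le (fun y => abs_nonneg _) hbd1 (hgxabs.mul_left C₁)
  have hf2 : Summable (fun y : V d => g (x - y) * (C₁ * X ^ a)) := hgx.mul_right _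
  -- rewrite the subtracted term
  have hrw : (∑' y : V d, g y) * (C₁ * X ^ a) = ∑' y : V d, g (x - y) * (C₁ * X ^ a) := by
    rw [tsum_mul_right]
    congr 1
    have := (Equiv.subLeft x).tsum_eq g
    simpa [Function.comp] using this.symm
  have hdiff : (∑' y : V d, (C₁ * bkt L y ^ a) * g (x - y)) - (∑' y : V d, g y) * (C₁ * X ^ a)
      = ∑' y : V d, ((C₁ * bkt L y ^ a) * g (x - y) - g (x - y) * (C₁ * X ^ a)) := by
    rw [hrw]
    exact (Summable.tsum_sub hf1 hf2).symm
  -- pointwise bound by the "Term"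
  have hterm : ∀ y : V d,
      |(C₁ * bkt L y ^ a) * g (x - y) - g (x - y) * (C₁ * X ^ a)|
        ≤ C₁ * C₃ * (|bkt L y ^ a - X ^ a| * bkt L (x - y) ^ (-(d:ℝ) - ρ)) := by
    intro y
    have e : (C₁ * bkt L y ^ a) * g (x - y) - g (x - y) * (C₁ * X ^ a)
        = C₁ * ((bkt L y ^ a - X ^ a) * g (x - y)) := by ring
    rw [e, abs_mul, abs_mul, abs_of_nonneg hC₁]
    have hdel : |bkt L y ^ a - X ^ a| * kdelta (x - y) = 0 := by
      by_cases hxy : x = y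
      · have : bkt L y ^ a - X ^ a = 0 := by rw [hX, hxy]; ring
        rw [this, abs_zero, zero_mul]
      · have hne : x - y ≠ 0 := sub_ne_zero.mpr hxy
        simp [kdelta, hne]
    calc C₁ * (|bkt L y ^ a - X ^ a| * |g (x - y)|)
        ≤ C₁ * (|bkt L y ^ a - X ^ a|
            * (C₂ * kdelta (x - y) + C₃ * bkt L (x - y) ^ (-(d:ℝ) - ρ))) := by
          apply mul_le_mul_of_nonneg_left _ hC₁
          exact mul_le_mul_of_nonneg_left (hgb (x - y)) (abs_nonneg _)
      _ = C₁ * (C₂ * (|bkt L y ^ a - X ^ a| * kdelta (x - y))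
            + C₃ * (|bkt L y ^ a - X ^ a| * bkt L (x - y) ^ (-(d:ℝ) - ρ))) := by ring
      _ = C₁ * C₃ * (|bkt L y ^ a - X ^ a| * bkt L (x - y) ^ (-(d:ℝ) - ρ)) := by
          rw [hdel]
          ring
  -- the summable majorant Φ
  have hsbW : Summable (fun y : V d => bkt L (x - y) ^ (-(d:ℝ) - ρ/2)) := by
    have := (Equiv.subLeft x).summable_iff (f := fun z : V d => bkt L z ^ (-(d:ℝ) - ρ/2))
    simpa [Function.comp_def] using this.mpr hsb
  set S := ∑' z : V d, bkt L z ^ (-(d:ℝ) - ρ/2) with hS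
  have hsbWsum : (∑' y : V d, bkt L (x - y) ^ (-(d:ℝ) - ρ/2)) = S := by
    rw [hS]
    have := (Equiv.subLeft x).tsum_eq (fun z : V d => bkt L z ^ (-(d:ℝ) - ρ/2))
    simpa [Function.comp] using this
  have hS0 : 0 ≤ S := tsum_nonneg fun z => rpow_nonneg (bkt_pos hL z).le _
  set q := max (1 - ρ/2) 0 with hq
  have hΦ1 : Summable (fun y : V d => c1 * X ^ (a - 1 + q) * bkt L (x - y) ^ (-(d:ℝ) - ρ/2)) :=
    hsbW.mul_left _
  have hΦ2 : Summable (fun y : V d => c2 * X ^ (a - ρ/2) * bkt L (x - y) ^ (-(d:ℝ) - ρ/2)) :=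
    hsbW.mul_left _
  have hΦ3 : Summable (fun y : V d => c3 * X ^ (a - ρ/2) * bkt L y ^ (-(d:ℝ) - ρ/2)) :=
    hsb.mul_left _
  have hΦ : Summable (fun y : V d =>
      c1 * X ^ (a - 1 + q) * bkt L (x - y) ^ (-(d:ℝ) - ρ/2)
      + c2 * X ^ (a - ρ/2) * bkt L (x - y) ^ (-(d:ℝ) - ρ/2)
      + c3 * X ^ (a - ρ/2) * bkt L y ^ (-(d:ℝ) - ρ/2)) := (hΦ1.add hΦ2).add hΦ3
  have hΦsum : (∑' y : V d,
      (c1 * X ^ (a - 1 + q) * bkt L (x - y) ^ (-(d:ℝ) - ρ/2)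
      + c2 * X ^ (a - ρ/2) * bkt L (x - y) ^ (-(d:ℝ) - ρ/2)
      + c3 * X ^ (a - ρ/2) * bkt L y ^ (-(d:ℝ) - ρ/2)))
      = c1 * X ^ (a - 1 + q) * S + c2 * X ^ (a - ρ/2) * S + c3 * X ^ (a - ρ/2) * S := by
    rw [Summable.tsum_add (hΦ1.add hΦ2) hΦ3, Summable.tsum_add hΦ1 hΦ2, tsum_mul_left, tsum_mul_left,
      tsum_mul_left, hsbWsum]
  -- pointwise: |F| ≤ C₁C₃ Φ
  have hpt2 : ∀ y : V d,
      |(C₁ * bkt L y ^ a) * g (x - y) - g (x - y) * (C₁ * X ^ a)|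
        ≤ C₁ * C₃ * (c1 * X ^ (a - 1 + q) * bkt L (x - y) ^ (-(d:ℝ) - ρ/2)
            + c2 * X ^ (a - ρ/2) * bkt L (x - y) ^ (-(d:ℝ) - ρ/2)
            + c3 * X ^ (a - ρ/2) * bkt L y ^ (-(d:ℝ) - ρ/2)) := by
    intro y
    refine (hterm y).trans ?_
    apply mul_le_mul_of_nonneg_left _ (mul_nonneg hC₁ hC₃)
    exact term_bound hL had ha0 hρ x y
  have hFabs : Summable (fun y : V d =>
      |(C₁ * bkt L y ^ a) * g (x - y) - g (x - y) * (C₁ * X ^ a)|) := by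
    apply Summable.of_nonneg_of_le (fun y => abs_nonneg _) _ (hgxabs.mul_left (2 * C₁))
    intro y
    calc |(C₁ * bkt L y ^ a) * g (x - y) - g (x - y) * (C₁ * X ^ a)|
        ≤ |(C₁ * bkt L y ^ a) * g (x - y)| + |g (x - y) * (C₁ * X ^ a)| := abs_sub _ _
      _ ≤ 2 * C₁ * |g (x - y)| := by
          have h1 := hbd1 y
          have h2 := hbd2 y
          linarith
  -- exponent comparisons
  have hx1 : X ^ (a - 1 + q) ≤ X ^ (a - ρ') := by
    apply rpow_le_rpow_of_exponent_le hX1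
    rw [hq, hρ']
    rcases le_total (1 - ρ/2) 0 with h | h
    · rw [max_eq_right h]
      have := min_le_left 1 (ρ/2)
      linarith
    · rw [max_eq_left h]
      have := min_le_right 1 (ρ/2)
      linarith
  have hx2 : X ^ (a - ρ/2) ≤ X ^ (a - ρ') := by
    apply rpow_le_rpow_of_exponent_le hX1
    linarith
  have hxρ'0 : 0 ≤ X ^ (a - ρ') := rpow_nonneg hX0.le _
  -- the final chain
  calc |(∑' y : V d, (C₁ * bkt L y ^ a) * g (x - y)) - (∑' y : V d, g y) * (C₁ * X ^ a)|
      = |∑' y : V d, ((C₁ * bkt L y ^ a) * g (x - y) - g (x - y) * (C₁ * X ^ a))| := by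
        rw [hdiff]
    _ ≤ ∑' y : V d, |(C₁ * bkt L y ^ a) * g (x - y) - g (x - y) * (C₁ * X ^ a)| := by
        have := norm_tsum_le_tsum_norm
          (f := fun y : V d => (C₁ * bkt L y ^ a) * g (x - y) - g (x - y) * (C₁ * X ^ a))
          (by simpa [Real.norm_eq_abs] using hFabs)
        simpa [Real.norm_eq_abs] using this
    _ ≤ ∑' y : V d, (C₁ * C₃ * (c1 * X ^ (a - 1 + q) * bkt L (x - y) ^ (-(d:ℝ) - ρ/2)
          + c2 * X ^ (a - ρ/2) * bkt L (x - y) ^ (-(d:ℝ) - ρ/2)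
          + c3 * X ^ (a - ρ/2) * bkt L y ^ (-(d:ℝ) - ρ/2))) :=
        Summable.tsum_le_tsum hpt2 hFabs (hΦ.mul_left _)
    _ = C₁ * C₃ * (c1 * X ^ (a - 1 + q) * S + c2 * X ^ (a - ρ/2) * S + c3 * X ^ (a - ρ/2) * S) := by
        rw [tsum_mul_left, hΦsum]
    _ ≤ C₁ * C₃ * ((c1 + c2 + c3) * Kc d (ρ/2) * X ^ (a - ρ')) := by
        apply mul_le_mul_of_nonneg_left _ (mul_nonneg hC₁ hC₃)
        have t1 : c1 * X ^ (a - 1 + q) * S ≤ c1 * X ^ (a - ρ') * Kc d (ρ/2) :=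
          mul_le_mul (mul_le_mul_of_nonneg_left hx1 hc1n) hsbK hS0
            (mul_nonneg hc1n hxρ'0)
        have t2 : c2 * X ^ (a - ρ/2) * S ≤ c2 * X ^ (a - ρ') * Kc d (ρ/2) :=
          mul_le_mul (mul_le_mul_of_nonneg_left hx2 hc2n) hsbK hS0
            (mul_nonneg hc2n hxρ'0)
        have t3 : c3 * X ^ (a - ρ/2) * S ≤ c3 * X ^ (a - ρ') * Kc d (ρ/2) :=
          mul_le_mul (mul_le_mul_of_nonneg_left hx2 hc3n) hsbK hS0
            (mul_nonneg hc3n hxρ'0)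
        have heq : (c1 + c2 + c3) * Kc d (ρ/2) * X ^ (a - ρ')
            = c1 * X ^ (a - ρ') * Kc d (ρ/2) + c2 * X ^ (a - ρ') * Kc d (ρ/2)
              + c3 * X ^ (a - ρ') * Kc d (ρ/2) := by ring
        linarith
    _ = C * C₁ * C₃ * X ^ (a - ρ') := by
        rw [hC]
        ring

end LongRange
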